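/- Let r, ε > 0, a = √(rε + ε²/4), p₁ = (−a,0), p₂ = (a,0), and h(x) = (1/2π)(log|x−p₁| − log|x−p₂|). Then for every point x = (0, y) on the vertical axis, ∇h(0, y) = (1/π)·(a/(a² + y²), 0). In particular |∇h(0,y)| ≤ |∇h(0,0)| = 1/(πa) for all y, and |∇h(0,y)| ≤ C/√ε with C = 1/(π√r). -/

import Mathlib

open Real Filter Metric

noncomputable section

abbrev E2 := EuclideanSpace ℝ (Fin 2)

/-- The point (a, b) in ℝ². -/
def pt (a b : ℝ) : E2 := (WithLp.equiv 2 (Fin 2 → ℝ)).symm ![a, b]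

/-- Inversion (reflection) across the circle ∂B(c, r). -/
def refl2 (c : E2) (r : ℝ) (x : E2) : E2 := (r ^ 2 / ‖x - c‖ ^ 2) • (x - c) + c
/-- The singular function for two equal disks of radius r at distance ε, with
reflection fixed points p₁ = (−a, 0), p₂ = (a, 0), a = √(rε + ε²/4). -/
def hsing (r ε : ℝ) (x : E2) : ℝ :=
  (1/(2*π)) * (Real.log ‖x - pt (-Real.sqrt (r*ε + ε^2/4)) 0‖
    - Real.log ‖x - pt (Real.sqrt (r*ε + ε^2/4)) 0‖)

open InnerProductSpace RealInnerProductSpace in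
lemma grad_log_norm {E : Type*} [NormedAddCommGroup E] [InnerProductSpace ℝ E]
    [CompleteSpace E] (p x : E) (hx : x ≠ p) :
    HasGradientAt (fun x => Real.log ‖x - p‖) ((‖x - p‖ ^ 2)⁻¹ • (x - p)) x := by
  have hv : x - p ≠ 0 := sub_ne_zero.mpr hx
  have hfun : (fun x : E => Real.log ‖x - p‖)
      = fun x => (1/2) * Real.log ⟪x - p, x - p⟫ := by
    funext z
    rw [real_inner_self_eq_norm_sq, Real.log_pow]
    ring
  have hid : HasFDerivAt (fun z : E => z - p) (ContinuousLinearMap.id ℝ E) x :=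
    (hasFDerivAt_id x).sub_const p
  have hinner := hid.inner ℝ hid
  have hpos : (0 : ℝ) < ⟪x - p, x - p⟫ := by
    rw [real_inner_self_eq_norm_sq]; exact pow_pos (norm_pos_iff.mpr hv) 2
  have hlog := (Real.hasDerivAt_log (ne_of_gt hpos)).comp_hasFDerivAt x hinner
  have hfinal := hlog.const_mul (1/2 : ℝ)
  rw [hasGradientAt_iff_hasFDerivAt, hfun]
  refine HasFDerivAt.congr_fderiv (f := fun x => 1 / 2 * Real.log ⟪x - p, x - p⟫) hfinal ?_
  ext u
  simp only [ContinuousLinearMap.smul_apply, ContinuousLinearMap.comp_apply,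
    ContinuousLinearMap.prod_apply, ContinuousLinearMap.coe_id', id_eq,
    fderivInnerCLM_apply, toDual_apply_apply, smul_eq_mul]
  rw [real_inner_smul_left, real_inner_comm u (x - p), real_inner_self_eq_norm_sq]
  field_simp
  ring

lemma pt_sub (a b c d : ℝ) : pt a b - pt c d = pt (a - c) (b - d) := by
  ext i; fin_cases i <;> simp [pt]

lemma pt_smul (s a b : ℝ) : s • pt a b = pt (s * a) (s * b) := by
  ext i; fin_cases i <;> simp [pt]

lemma norm_pt (a b : ℝ) : ‖pt a b‖ = Real.sqrt (a ^ 2 + b ^ 2) := by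
  rw [EuclideanSpace.norm_eq]
  congr 1
  simp [pt, Fin.sum_univ_two, sq_abs]

theorem stmt19 (r ε : ℝ) (hr : 0 < r) (hε : 0 < ε) :
    ∀ y : ℝ,
      gradient (hsing r ε) (pt 0 y)
        = (1/π) • pt (Real.sqrt (r*ε + ε^2/4) / (Real.sqrt (r*ε + ε^2/4) ^ 2 + y ^ 2)) 0 ∧
      ‖gradient (hsing r ε) (pt 0 y)‖ ≤ ‖gradient (hsing r ε) (pt 0 0)‖ ∧
      ‖gradient (hsing r ε) (pt 0 0)‖ = 1/(π * Real.sqrt (r*ε + ε^2/4)) ∧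
      ‖gradient (hsing r ε) (pt 0 y)‖ ≤ (1/(π * Real.sqrt r)) / Real.sqrt ε := by
  intro y
  set a : ℝ := Real.sqrt (r*ε + ε^2/4) with ha_def
  have hq : (0:ℝ) < r*ε + ε^2/4 := by positivity
  have ha : 0 < a := Real.sqrt_pos.mpr hq
  have ha2 : a ^ 2 = r*ε + ε^2/4 := Real.sq_sqrt hq.le
  have hπ : 0 < π := Real.pi_pos
  -- the key gradient computation for arbitrary y
  have key : ∀ z : ℝ, gradient (hsing r ε) (pt 0 z) = pt (a / (π * (a ^ 2 + z ^ 2))) 0 := by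
    intro z
    have hd : (0:ℝ) < a ^ 2 + z ^ 2 := by positivity
    have s1 : pt 0 z - pt (-a) 0 = pt a z := by rw [pt_sub]; norm_num
    have s2 : pt 0 z - pt a 0 = pt (-a) z := by rw [pt_sub]; norm_num
    have nz1 : pt 0 z ≠ pt (-a) 0 := by
      intro h
      have : pt a z = 0 := by rw [← s1, h, sub_self]
      have := congrArg norm this
      rw [norm_pt, norm_zero] at this
      exact absurd this (ne_of_gt (Real.sqrt_pos.mpr (by positivity)))
    have nz2 : pt 0 z ≠ pt a 0 := by
      intro h
      have : pt (-a) z = 0 := by rw [← s2, h, sub_self]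
      have := congrArg norm this
      rw [norm_pt, norm_zero] at this
      exact absurd this (ne_of_gt (Real.sqrt_pos.mpr
        (by rw [show ((-a):ℝ) ^ 2 = a ^ 2 by ring]; exact hd)))
    have n1 : ‖pt 0 z - pt (-a) 0‖ ^ 2 = a ^ 2 + z ^ 2 := by
      rw [s1, norm_pt, Real.sq_sqrt (by positivity)]
    have n2 : ‖pt 0 z - pt a 0‖ ^ 2 = a ^ 2 + z ^ 2 := by
      rw [s2, norm_pt, Real.sq_sqrt (by positivity), neg_pow]
      ring
    have g1 := grad_log_norm (pt (-a) 0) (pt 0 z) nz1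
    have g2 := grad_log_norm (pt a 0) (pt 0 z) nz2
    rw [n1, s1] at g1
    rw [n2, s2] at g2
    have H := ((g1.hasFDerivAt.sub g2.hasFDerivAt).const_mul (1/(2*π)))
    have Hg : HasGradientAt (hsing r ε)
        ((1/(2*π)) • ((a ^ 2 + z ^ 2)⁻¹ • pt a z - (a ^ 2 + z ^ 2)⁻¹ • pt (-a) z))
        (pt 0 z) := by
      rw [hasGradientAt_iff_hasFDerivAt, map_smul, map_sub]
      exact H
    rw [Hg.gradient]
    rw [← smul_sub, pt_sub, smul_smul, pt_smul,
      show (1/(2*π) * (a ^ 2 + z ^ 2)⁻¹) * (a - -a) = a / (π * (a ^ 2 + z ^ 2)) by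
        field_simp; ring,
      show (1/(2*π) * (a ^ 2 + z ^ 2)⁻¹) * (z - z) = 0 by ring]
  have normgrad : ∀ z : ℝ, ‖gradient (hsing r ε) (pt 0 z)‖ = a / (π * (a ^ 2 + z ^ 2)) := by
    intro z
    rw [key z, norm_pt]
    have hd : (0:ℝ) < a ^ 2 + z ^ 2 := by positivity
    rw [show (a / (π * (a ^ 2 + z ^ 2))) ^ 2 + 0 ^ 2 = (a / (π * (a ^ 2 + z ^ 2))) ^ 2 by ring]
    exact Real.sqrt_sq (by positivity)
  have hnorm0 : ‖gradient (hsing r ε) (pt 0 0)‖ = 1/(π * a) := by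
    rw [normgrad 0]
    rw [div_eq_div_iff (by positivity) (by positivity)]
    ring
  refine ⟨?_, ?_, hnorm0, ?_⟩
  · rw [key y, pt_smul, mul_zero,
      show (1:ℝ)/π * (a / (a ^ 2 + y ^ 2)) = a / (π * (a ^ 2 + y ^ 2)) by
        rw [div_mul_div_comm, one_mul]]
  · rw [normgrad y, hnorm0]
    rw [div_le_div_iff₀ (by positivity) (by positivity)]
    nlinarith [sq_nonneg y, hπ, ha]
  · rw [normgrad y]
    have h1 : a / (π * (a ^ 2 + y ^ 2)) ≤ 1 / (π * a) := by
      rw [div_le_div_iff₀ (by positivity) (by positivity)]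
      nlinarith [sq_nonneg y]
    have h2 : Real.sqrt (r * ε) ≤ a := Real.sqrt_le_sqrt (by nlinarith)
    have h3 : (1:ℝ) / (π * a) ≤ 1 / (π * Real.sqrt (r * ε)) := by
      have : 0 < Real.sqrt (r * ε) := Real.sqrt_pos.mpr (by positivity)
      gcongr
    have h4 : (1:ℝ) / (π * Real.sqrt (r * ε)) = (1/(π * Real.sqrt r)) / Real.sqrt ε := by
      rw [Real.sqrt_mul hr.le]
      field_simp
    linarith
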